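/- arXiv:2605.14936 — 5 statements merged into one kernel-verified Lean document; each statement's English description precedes it below -/
import Mathlib

section
/- Gap bound for proximal mappings: let g : ℝ^p → ℝ ∪ {+∞} be a proper convex lower semicontinuous function, let β ∈ ℝ^p, and let f(z;β) = (1/2)‖β − z‖² + g(z), whose unique minimizer is the proximal mapping prox_g(β). Let g*(u) = sup_w ( ⟨u,w⟩ − g(w) ) be the Fenchel conjugate and define the dual function d(u;β) = ⟨u,β⟩ − (1/2)‖u‖² − g*(u). Then for every z ∈ ℝ^p with f(z;β) < ∞ and every u ∈ ℝ^p with g*(u) < ∞: (a) d(u;β) ≤ f(z;β) (weak duality), and (b) ‖z − prox_g(β)‖ ≤ √( 2 ( f(z;β) − d(u;β) ) ). -/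
open scoped RealInnerProductSpace

/-- **Gap bound for proximal mappings.**
A proper convex lower semicontinuous `g : ℝ^p → ℝ ∪ {+∞}` is modelled by a real-valued
convex lower-semicontinuous function `g` on its (nonempty, hence proper) effective domain
`S = {w : g(w) < ∞}`.  For `β ∈ ℝ^p`, the proximal loss is `f(z;β) = (1/2)‖β − z‖² + g(z)`,
and its unique minimizer is the proximal mapping `prox_g(β)`.  The Fenchel conjugate at `u`
is `g*(u) = sup_w (⟪u,w⟫ − g(w))`; the hypothesis that `g*(u) < ∞` is encoded by the
existence of a real least upper bound `gstar` of `{⟪u,w⟫ − g(w) : w ∈ S}`.  Then for every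
`z` with `f(z;β) < ∞` (i.e. `z ∈ S`):
(a) weak duality `d(u;β) = ⟪u,β⟫ − (1/2)‖u‖² − g*(u) ≤ f(z;β)`, and
(b) `‖z − prox_g(β)‖ ≤ √(2 (f(z;β) − d(u;β)))`. -/
theorem proximal_gap_bound (p : ℕ)
    (S : Set (EuclideanSpace ℝ (Fin p))) (hSne : S.Nonempty)
    (g : EuclideanSpace ℝ (Fin p) → ℝ)
    (hgconv : ConvexOn ℝ S g)
    (hglsc : LowerSemicontinuousOn g S)
    (β proxβ : EuclideanSpace ℝ (Fin p)) (hproxS : proxβ ∈ S)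
    (hproxmin : ∀ z ∈ S,
      (1 / 2) * ‖β - proxβ‖ ^ 2 + g proxβ ≤ (1 / 2) * ‖β - z‖ ^ 2 + g z)
    (hproxuniq : ∀ z ∈ S,
      (1 / 2) * ‖β - z‖ ^ 2 + g z ≤ (1 / 2) * ‖β - proxβ‖ ^ 2 + g proxβ → z = proxβ)
    (u : EuclideanSpace ℝ (Fin p)) (gstar : ℝ)
    (hgstar : IsLUB ((fun w => ⟪u, w⟫ - g w) '' S) gstar) :
    ∀ z ∈ S,
      (⟪u, β⟫ - (1 / 2) * ‖u‖ ^ 2 - gstar ≤ (1 / 2) * ‖β - z‖ ^ 2 + g z) ∧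
      ‖z - proxβ‖ ≤ Real.sqrt (2 *
        (((1 / 2) * ‖β - z‖ ^ 2 + g z) - (⟪u, β⟫ - (1 / 2) * ‖u‖ ^ 2 - gstar))) := by

  have hSconv : Convex ℝ S := hgconv.1
  -- weak duality for any point of S
  have weak : ∀ w ∈ S, ⟪u, β⟫ - (1 / 2) * ‖u‖ ^ 2 - gstar ≤ (1 / 2) * ‖β - w‖ ^ 2 + g w := by
    intro w hw
    have h1 : ⟪u, w⟫ - g w ≤ gstar := hgstar.1 ⟨w, hw, rfl⟩
    have h2 : ‖u - (β - w)‖ ^ 2 = ‖u‖ ^ 2 - 2 * ⟪u, β - w⟫ + ‖β - w‖ ^ 2 :=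
      norm_sub_sq_real u (β - w)
    have h3 : ⟪u, β - w⟫ = ⟪u, β⟫ - ⟪u, w⟫ := inner_sub_right u β w
    nlinarith [sq_nonneg ‖u - (β - w)‖]
  intro z hz
  refine ⟨weak z hz, ?_⟩
  set C : ℝ := ‖z - proxβ‖ ^ 2 with hC
  have hG0 : (1 / 2) * ‖β - proxβ‖ ^ 2 + g proxβ ≤ (1 / 2) * ‖β - z‖ ^ 2 + g z :=
    hproxmin z hz
  -- strong convexity step
  have key : ∀ t : ℝ, 0 < t → t ≤ 1 →
      (1 - t) * C ≤ 2 * (((1 / 2) * ‖β - z‖ ^ 2 + g z)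
        - ((1 / 2) * ‖β - proxβ‖ ^ 2 + g proxβ)) := by
    intro t ht0 ht1
    set w : EuclideanSpace ℝ (Fin p) := (1 - t) • proxβ + t • z with hw
    have hwS : w ∈ S := hSconv hproxS hz (by linarith) ht0.le (by ring)
    have hgw : g w ≤ (1 - t) * g proxβ + t * g z :=
      hgconv.2 hproxS hz (by linarith) ht0.le (by ring)
    have hbw : β - w = (1 - t) • (β - proxβ) + t • (β - z) := by
      rw [hw]; module
    set a : EuclideanSpace ℝ (Fin p) := β - proxβ with ha
    set b : EuclideanSpace ℝ (Fin p) := β - z with hb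
    have hI : ‖(1 - t) • a + t • b‖ ^ 2
        = (1 - t) ^ 2 * ‖a‖ ^ 2 + 2 * ((1 - t) * t * ⟪a, b⟫) + t ^ 2 * ‖b‖ ^ 2 := by
      rw [norm_add_sq_real, norm_smul, norm_smul, real_inner_smul_left,
        real_inner_smul_right, Real.norm_eq_abs, Real.norm_eq_abs,
        abs_of_nonneg (by linarith : (0:ℝ) ≤ 1 - t), abs_of_nonneg ht0.le]
      ring
    have hab : ‖a - b‖ ^ 2 = ‖a‖ ^ 2 - 2 * ⟪a, b⟫ + ‖b‖ ^ 2 := norm_sub_sq_real a b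
    have habzp : a - b = z - proxβ := by rw [ha, hb]; module
    have hnormw : ‖β - w‖ ^ 2 = (1 - t) * ‖a‖ ^ 2 + t * ‖b‖ ^ 2 - t * (1 - t) * C := by
      rw [hbw, hI, hC, ← habzp, hab]; ring
    have hmin := hproxmin w hwS
    rw [hnormw] at hmin
    nlinarith [hmin, hgw]
  have hstrong : C ≤ 2 * (((1 / 2) * ‖β - z‖ ^ 2 + g z)
      - ((1 / 2) * ‖β - proxβ‖ ^ 2 + g proxβ)) := by
    by_contra hcon
    push_neg at hcon
    set G : ℝ := 2 * (((1 / 2) * ‖β - z‖ ^ 2 + g z)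
      - ((1 / 2) * ‖β - proxβ‖ ^ 2 + g proxβ)) with hGdef
    have hGnn : 0 ≤ G := by rw [hGdef]; linarith
    have hCpos : 0 < C := lt_of_le_of_lt hGnn hcon
    have := key ((C - G) / (2 * C)) (div_pos (by linarith) (by linarith)) (by
      rw [div_le_one (by positivity)]; linarith)
    have h2 : (1 - (C - G) / (2 * C)) * C = (C + G) / 2 := by
      field_simp; ring
    rw [h2] at this
    linarith
  have hdprox := weak proxβ hproxS
  rw [show z - proxβ = z - proxβ from rfl]
  have hwz := weak z hz
  rw [Real.le_sqrt (norm_nonneg _)]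
  · nlinarith [hstrong, hdprox]
  · linarith
end

section
/- Generalized Pythagorean inequality for Bregman projection: let ψ : ℝ^p → ℝ be continuously differentiable and strictly convex, let D_ψ(z,β) = ψ(z) − ψ(β) − ⟨z − β, ∇ψ(β)⟩ be the associated Bregman divergence, let C ⊆ ℝ^p be a nonempty convex set, let β ∈ ℝ^p, and suppose ẑ ∈ C minimizes z ↦ D_ψ(z,β) over C. Then for every z ∈ C, D_ψ(z,β) ≥ D_ψ(z,ẑ) + D_ψ(ẑ,β). -/
open scoped RealInnerProductSpace

/-- The Bregman divergence `D_ψ(z, b) = ψ(z) − ψ(b) − ⟪z − b, ∇ψ(b)⟫` generated by a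
differentiable function `ψ : ℝ^p → ℝ`. -/
noncomputable def bregmanDiv (p : ℕ) (ψ : EuclideanSpace ℝ (Fin p) → ℝ)
    (z b : EuclideanSpace ℝ (Fin p)) : ℝ :=
  ψ z - ψ b - ⟪z - b, gradient ψ b⟫

/-- **Generalized Pythagorean inequality for Bregman projection.**
Let `ψ : ℝ^p → ℝ` be continuously differentiable and strictly convex, let
`D_ψ(z,β) = ψ(z) − ψ(β) − ⟪z − β, ∇ψ(β)⟫` be the associated Bregman divergence, let
`C ⊆ ℝ^p` be a nonempty convex set, let `β ∈ ℝ^p`, and suppose `ẑ ∈ C` minimizes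
`z ↦ D_ψ(z,β)` over `C` (the Bregman projection of `β` onto `C`).  Then for every `z ∈ C`,
`D_ψ(z,β) ≥ D_ψ(z,ẑ) + D_ψ(ẑ,β)`. -/
theorem bregman_pythagorean_inequality (p : ℕ)
    (ψ : EuclideanSpace ℝ (Fin p) → ℝ)
    (hψdiff : ContDiff ℝ 1 ψ)
    (hψstrict : StrictConvexOn ℝ Set.univ ψ)
    (C : Set (EuclideanSpace ℝ (Fin p))) (hCne : C.Nonempty) (hCconv : Convex ℝ C)
    (β : EuclideanSpace ℝ (Fin p))
    (zhat : EuclideanSpace ℝ (Fin p)) (hzhat : zhat ∈ C)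
    (hmin : ∀ z ∈ C, bregmanDiv p ψ zhat β ≤ bregmanDiv p ψ z β) :
    ∀ z ∈ C, bregmanDiv p ψ z zhat + bregmanDiv p ψ zhat β ≤ bregmanDiv p ψ z β := by
  intro z hz
  have hψd : Differentiable ℝ ψ := hψdiff.differentiable one_ne_zero
  set d : EuclideanSpace ℝ (Fin p) := z - zhat with hd
  set L : ℝ → EuclideanSpace ℝ (Fin p) := fun t => zhat + t • d with hL
  set g : ℝ → ℝ := fun t => bregmanDiv p ψ (L t) β with hg
  set D0 : ℝ := ⟪gradient ψ zhat, d⟫ - ⟪d, gradient ψ β⟫ with hD0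
  -- L t ∈ C for t ∈ [0,1]
  have hLC : ∀ t ∈ Set.Icc (0:ℝ) 1, L t ∈ C := by
    intro t ht
    have : L t = (1 - t) • zhat + t • z := by
      simp only [hL, hd]
      module
    rw [this]
    exact hCconv hzhat hz (by linarith [ht.1, ht.2]) ht.1 (by ring)
  -- derivative of L
  have hLd : ∀ t : ℝ, HasDerivAt L d t := by
    intro t
    simpa [hL] using ((hasDerivAt_id t).smul_const d).const_add zhat
  -- derivative of g at 0
  have hgd : HasDerivAt g D0 0 := by
    have hψ0 : HasFDerivAt ψ ((InnerProductSpace.toDual ℝ _) (gradient ψ zhat)) (L 0) := by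
      rw [show L 0 = zhat from by simp [hL]]
      exact (hψd zhat).hasGradientAt.hasFDerivAt
    have h1 : HasDerivAt (fun t => ψ (L t)) (⟪gradient ψ zhat, d⟫) 0 := by
      have := hψ0.comp_hasDerivAt 0 (hLd 0)
      exact this
    have h2 : HasDerivAt (fun t => ⟪L t - β, gradient ψ β⟫) (⟪d, gradient ψ β⟫) 0 := by
      have heq : (fun t => ⟪L t - β, gradient ψ β⟫)
          = fun t : ℝ => ⟪zhat - β, gradient ψ β⟫ + t * ⟪d, gradient ψ β⟫ := by
        funext t
        simp only [hL]
        rw [add_sub_right_comm, inner_add_left, real_inner_smul_left]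
      rw [heq]
      simpa using ((hasDerivAt_id (0:ℝ)).mul_const (⟪d, gradient ψ β⟫)).const_add
        (⟪zhat - β, gradient ψ β⟫)
    have := (h1.sub_const (ψ β)).sub h2
    exact this
  -- D0 ≥ 0 via slopes
  have hD0nn : 0 ≤ D0 := by
    have htend : Filter.Tendsto (slope g 0) (nhdsWithin 0 {(0:ℝ)}ᶜ) (nhds D0) :=
      hasDerivAt_iff_tendsto_slope.mp hgd
    have htend' : Filter.Tendsto (slope g 0) (nhdsWithin 0 (Set.Ioi 0)) (nhds D0) :=
      htend.mono_left (nhdsWithin_mono _ (fun x hx => by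
        simp only [Set.mem_compl_iff, Set.mem_singleton_iff]
        exact ne_of_gt hx))
    refine ge_of_tendsto htend' ?_
    filter_upwards [Ioc_mem_nhdsGT_of_mem (Set.mem_Ico.mpr ⟨le_refl (0:ℝ), one_pos⟩)] with t ht
    have htC : L t ∈ C := hLC t ⟨le_of_lt ht.1, ht.2⟩
    have hle : g 0 ≤ g t := by
      have h0 : L 0 = zhat := by simp [hL]
      simpa [hg, h0] using hmin (L t) htC
    rw [slope_def_field]
    have : (0:ℝ) < t := ht.1
    rw [div_nonneg_iff]
    left
    exact ⟨by linarith, by linarith⟩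
  -- final algebra
  have key : bregmanDiv p ψ z β - bregmanDiv p ψ z zhat - bregmanDiv p ψ zhat β = D0 := by
    simp only [bregmanDiv, hD0]
    have h1 : z - β = (z - zhat) + (zhat - β) := by abel
    rw [h1, inner_add_left, real_inner_comm (z - zhat) (gradient ψ zhat)]
    simp only [hd]
    ring
  linarith
end

section
/- Bregman duality gap bound (Theorem 2): let ψ : ℝ^p → ℝ be continuously differentiable and strictly convex with Bregman divergence D_ψ(z,β) = ψ(z) − ψ(β) − ⟨z − β, ∇ψ(β)⟩, let C ⊆ ℝ^p be a nonempty convex set, let β ∈ ℝ^p, and define the primal f(z;β) = D_ψ(z,β) for z ∈ C (and +∞ off C) and the dual function d(u;β) = −ψ*(∇ψ(β) − u) − σ_C(u) + ⟨β, ∇ψ(β)⟩ − ψ(β) for u ∈ ℝ^p, where ψ* is the Fenchel conjugate of ψ and σ_C(u) = sup_{w∈C} ⟨u,w⟩. Suppose ẑ ∈ C is the unique minimizer of z ↦ D_ψ(z,β) over C. Then for every z ∈ C and every u ∈ ℝ^p with ψ*(∇ψ(β) − u) and σ_C(u) finite: (a) d(u;β) ≤ f(z;β) (weak duality), and (b)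 D_ψ(z,ẑ) ≤ f(z;β) − d(u;β). -/
open scoped RealInnerProductSpace

/-- **Bregman duality gap bound (Theorem 2).**
Let `ψ : ℝ^p → ℝ` be continuously differentiable and strictly convex, with Bregman
divergence `D_ψ(z,β) = ψ(z) − ψ(β) − ⟪z − β, ∇ψ(β)⟫`, let `C ⊆ ℝ^p` be a nonempty convex
set, and let `β ∈ ℝ^p`.  The primal loss is `f(z;β) = D_ψ(z,β)` for `z ∈ C`, and the dual
function is `d(u;β) = −ψ*(∇ψ(β) − u) − σ_C(u) + ⟪β, ∇ψ(β)⟫ − ψ(β)`, where the finiteness of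
the Fenchel conjugate value `ψ*(∇ψ(β) − u) = sup_w (⟪∇ψ(β) − u, w⟫ − ψ(w))` and of the
support function value `σ_C(u) = sup_{w∈C} ⟪u,w⟫` is encoded by the existence of real least
upper bounds `psistar` and `sigmaC`.  Suppose `ẑ ∈ C` is the (unique) minimizer of
`z ↦ D_ψ(z,β)` over `C`.  Then for every `z ∈ C`:
(a) weak duality `d(u;β) ≤ f(z;β)`, and
(b) `D_ψ(z,ẑ) ≤ f(z;β) − d(u;β)`. -/
theorem bregman_gap_bound (p : ℕ)
    (ψ : EuclideanSpace ℝ (Fin p) → ℝ)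
    (hψdiff : ContDiff ℝ 1 ψ)
    (hψstrict : StrictConvexOn ℝ Set.univ ψ)
    (C : Set (EuclideanSpace ℝ (Fin p))) (hCne : C.Nonempty) (hCconv : Convex ℝ C)
    (β : EuclideanSpace ℝ (Fin p))
    (zhat : EuclideanSpace ℝ (Fin p)) (hzhatC : zhat ∈ C)
    (hmin : ∀ z ∈ C, bregmanDiv p ψ zhat β ≤ bregmanDiv p ψ z β)
    (huniq : ∀ z ∈ C, bregmanDiv p ψ z β ≤ bregmanDiv p ψ zhat β → z = zhat)
    (u : EuclideanSpace ℝ (Fin p))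
    (psistar : ℝ)
    (hpsistar : IsLUB (Set.range fun w => ⟪gradient ψ β - u, w⟫ - ψ w) psistar)
    (sigmaC : ℝ)
    (hsigmaC : IsLUB ((fun w => ⟪u, w⟫) '' C) sigmaC) :
    ∀ z ∈ C,
      (-psistar - sigmaC + ⟪β, gradient ψ β⟫ - ψ β ≤ bregmanDiv p ψ z β) ∧
      bregmanDiv p ψ z zhat ≤
        bregmanDiv p ψ z β - (-psistar - sigmaC + ⟪β, gradient ψ β⟫ - ψ β) := by
  have hψd : Differentiable ℝ ψ := hψdiff.differentiable one_ne_zero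
  -- weak duality for any point of C
  have ha : ∀ w ∈ C, -psistar - sigmaC + ⟪β, gradient ψ β⟫ - ψ β ≤ bregmanDiv p ψ w β := by
    intro w hw
    have h1 : ⟪gradient ψ β - u, w⟫ - ψ w ≤ psistar := hpsistar.1 ⟨w, rfl⟩
    have h2 : ⟪u, w⟫ ≤ sigmaC := hsigmaC.1 ⟨w, hw, rfl⟩
    simp only [bregmanDiv, inner_sub_left] at h1 h2 ⊢
    have hcw : ⟪w, gradient ψ β⟫ = ⟪gradient ψ β, w⟫ := real_inner_comm _ _
    have hcb : ⟪β, gradient ψ β⟫ = ⟪gradient ψ β, β⟫ := real_inner_comm _ _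
    linarith
  intro z hz
  refine ⟨ha z hz, ?_⟩
  -- first-order optimality: ⟪grad ψ ẑ - grad ψ β, z - ẑ⟫ ≥ 0
  have hkey : (0:ℝ) ≤ ⟪gradient ψ zhat, z - zhat⟫ - ⟪gradient ψ β, z - zhat⟫ := by
    set F : EuclideanSpace ℝ (Fin p) → ℝ := fun w => ψ w - ⟪gradient ψ β, w⟫ with hF
    have hlocmin : IsLocalMinOn F C zhat := by
      have hmin' : IsMinOn F C zhat := by
        intro w hw
        have := hmin w hw
        simp only [bregmanDiv] at this
        simp only [F, Set.mem_setOf_eq]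
        have e1 : ⟪w - β, gradient ψ β⟫ = ⟪gradient ψ β, w⟫ - ⟪gradient ψ β, β⟫ := by
          rw [inner_sub_left, real_inner_comm w, real_inner_comm β]
        have e2 : ⟪zhat - β, gradient ψ β⟫ = ⟪gradient ψ β, zhat⟫ - ⟪gradient ψ β, β⟫ := by
          rw [inner_sub_left, real_inner_comm zhat, real_inner_comm β]
        rw [e1, e2] at this
        linarith
      exact hmin'.filter_mono inf_le_right
    have hgrad : HasFDerivAt ψ ((InnerProductSpace.toDual ℝ _) (gradient ψ zhat)) zhat :=
      ((hψd zhat).hasGradientAt).hasFDerivAt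
    have hFderiv : HasFDerivAt F
        ((InnerProductSpace.toDual ℝ _) (gradient ψ zhat) - innerSL ℝ (gradient ψ β)) zhat :=
      hgrad.sub (innerSL ℝ (gradient ψ β)).hasFDerivAt
    have hcone : z - zhat ∈ posTangentConeAt C zhat :=
      sub_mem_posTangentConeAt_of_segment_subset (hCconv.segment_subset hzhatC hz)
    have := hlocmin.hasFDerivWithinAt_nonneg hFderiv.hasFDerivWithinAt hcone
    simpa [InnerProductSpace.toDual_apply_apply] using this
  have hb := ha zhat hzhatC
  -- algebra: D(z,β) - D(ẑ,β) - D(z,ẑ) = ⟪grad ψ ẑ - grad ψ β, z - ẑ⟫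
  simp only [bregmanDiv] at hb ⊢
  have e1 : ⟪z - β, gradient ψ β⟫ = ⟪gradient ψ β, z⟫ - ⟪gradient ψ β, β⟫ := by
    rw [inner_sub_left, real_inner_comm z, real_inner_comm β]
  have e2 : ⟪zhat - β, gradient ψ β⟫ = ⟪gradient ψ β, zhat⟫ - ⟪gradient ψ β, β⟫ := by
    rw [inner_sub_left, real_inner_comm zhat, real_inner_comm β]
  have e3 : ⟪z - zhat, gradient ψ zhat⟫ = ⟪gradient ψ zhat, z - zhat⟫ := real_inner_comm _ _
  have e4 : ⟪gradient ψ β, z - zhat⟫ = ⟪gradient ψ β, z⟫ - ⟪gradient ψ β, zhat⟫ :=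
    inner_sub_right _ _ _
  rw [e1, e3]
  rw [e2] at hb
  rw [e4] at hkey
  linarith
end

section
/- Power-law tail of the marginal gap-shrinkage prior (Supplement Lemma): let α > 0 and λ > 0, and for θ ∈ ℝ with θ ≠ 0 define I(θ) = ∫_{−λ}^{λ} exp( −α(λ − |u|)|θ| ) · ( 1 + (θ + u)² )^{−1} du. Then I(θ) ≥ 2( 1 − exp(−αλ|θ|) ) / ( α|θ| ( 1 + (|θ| + λ)² ) ). Consequently, there exist constants C > 0 and M > 0 such that I(θ) ≥ C |θ|^{−3} whenever |θ| ≥ M; in particular, the marginal density of the gap-shrinkage prior with Cauchy base kernel has a power-law (at least cubic) tail rather than an exponentially decaying one. -/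
open Real intervalIntegral

lemma aux_half (α l t : ℝ) (hα : 0 < α) (hl : 0 < l) (ht : 0 < t) :
    ∫ u in (0:ℝ)..l, Real.exp (-(α * (l - |u|) * t)) =
      (1 - Real.exp (-(α * l * t))) / (α * t) := by
  have h1 : ∫ u in (0:ℝ)..l, Real.exp (-(α * (l - |u|) * t)) =
      ∫ u in (0:ℝ)..l, Real.exp (-(α * l * t)) * Real.exp ((α * t) * u) := by
    apply intervalIntegral.integral_congr
    intro u hu
    rw [Set.uIcc_of_le hl.le] at hu
    simp only
    rw [abs_of_nonneg hu.1, ← Real.exp_add]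
    ring_nf
  rw [h1, intervalIntegral.integral_const_mul,
    intervalIntegral.integral_comp_mul_left (fun x => Real.exp x) (by positivity : α * t ≠ 0)]
  simp [integral_exp]
  have he : Real.exp (-(α * l * t)) * Real.exp (α * l * t) = 1 := by
    rw [← Real.exp_add]; simp
  rw [show α * t * l = α * l * t from by ring]
  field_simp
  linear_combination he

lemma aux_full (α l t : ℝ) (hα : 0 < α) (hl : 0 < l) (ht : 0 < t) :
    ∫ u in (-l)..l, Real.exp (-(α * (l - |u|) * t)) =
      2 * (1 - Real.exp (-(α * l * t))) / (α * t) := by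
  have hc : Continuous fun u : ℝ => Real.exp (-(α * (l - |u|) * t)) := by continuity
  have hsplit := intervalIntegral.integral_add_adjacent_intervals
    (hc.intervalIntegrable (μ := MeasureTheory.volume) (-l) 0) (hc.intervalIntegrable (μ := MeasureTheory.volume) 0 l)
  have hneg := intervalIntegral.integral_comp_neg (a := 0) (b := l)
    (fun u => Real.exp (-(α * (l - |u|) * t)))
  simp only [abs_neg, neg_zero] at hneg
  rw [← hsplit, ← hneg, aux_half α l t hα hl ht]
  ring



/-- The marginal integral `I(θ) = ∫_{−λ}^{λ} exp(−α(λ−|u|)|θ|) (1 + (θ+u)²)⁻¹ du`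
appearing in the marginal density of the ℓ1 gap-shrinkage prior with Cauchy base kernel. -/
noncomputable def gapShrinkageMarginal (α l θ : ℝ) : ℝ :=
  ∫ u in (-l)..l, Real.exp (-(α * (l - |u|) * |θ|)) * (1 + (θ + u) ^ 2)⁻¹

lemma main_bound (α l : ℝ) (hα : 0 < α) (hl : 0 < l) (θ : ℝ) (hθ : θ ≠ 0) :
    2 * (1 - Real.exp (-(α * l * |θ|))) / (α * |θ| * (1 + (|θ| + l) ^ 2)) ≤
      gapShrinkageMarginal α l θ := by
  set t := |θ| with ht
  have ht0 : 0 < t := abs_pos.mpr hθ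
  have hden : (0:ℝ) < 1 + (t + l) ^ 2 := by positivity
  have hmono : (1 + (t + l) ^ 2)⁻¹ * ∫ u in (-l)..l, Real.exp (-(α * (l - |u|) * t)) ≤
      gapShrinkageMarginal α l θ := by
    rw [← intervalIntegral.integral_const_mul]
    have hcont : Continuous fun u : ℝ => Real.exp (-(α * (l - |u|) * |θ|)) * (1 + (θ + u) ^ 2)⁻¹ := by
      exact (by continuity : Continuous fun u : ℝ => Real.exp (-(α * (l - |u|) * |θ|))).mul
        (Continuous.inv₀ (by continuity) (fun u => by positivity))
    apply intervalIntegral.integral_mono_on (by linarith)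
    · exact Continuous.intervalIntegrable (by continuity) _ _
    · exact hcont.intervalIntegrable _ _
    · intro u hu
      rw [mul_comm]
      apply mul_le_mul_of_nonneg_left _ (Real.exp_nonneg _)
      apply inv_anti₀ (by positivity)
      have h1 : |θ + u| ≤ t + l := by
        calc |θ + u| ≤ |θ| + |u| := abs_add_le _ _
        _ ≤ t + l := by
          rcases hu with ⟨h2, h3⟩
          have := abs_le.mpr ⟨by linarith, h3⟩
          linarith [this]
      nlinarith [sq_abs (θ + u), sq_nonneg (θ + u), abs_nonneg (θ + u)]
  rw [aux_full α l t hα hl ht0] at hmono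
  calc 2 * (1 - Real.exp (-(α * l * t))) / (α * t * (1 + (t + l) ^ 2))
      = (1 + (t + l) ^ 2)⁻¹ * (2 * (1 - Real.exp (-(α * l * t))) / (α * t)) := by
        rw [inv_mul_eq_div, div_div]
    _ ≤ _ := hmono

/-- **Power-law tail of the marginal gap-shrinkage prior (Supplement Lemma).**
Let `α > 0` and `λ > 0`, and for `θ ≠ 0` let
`I(θ) = ∫_{−λ}^{λ} exp(−α(λ−|u|)|θ|) (1 + (θ+u)²)⁻¹ du`.  Then
`I(θ) ≥ 2(1 − exp(−αλ|θ|)) / (α|θ|(1 + (|θ|+λ)²))`.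
Consequently there exist constants `C > 0` and `M > 0` such that `I(θ) ≥ C |θ|⁻³` whenever
`|θ| ≥ M`; i.e. the marginal density of the gap-shrinkage prior with Cauchy base kernel has
a power-law (at least cubic) tail rather than an exponentially decaying one. -/
theorem gap_shrinkage_marginal_power_tail (α l : ℝ) (hα : 0 < α) (hl : 0 < l) :
    (∀ θ : ℝ, θ ≠ 0 →
      2 * (1 - Real.exp (-(α * l * |θ|))) / (α * |θ| * (1 + (|θ| + l) ^ 2)) ≤
        gapShrinkageMarginal α l θ) ∧
    (∃ C > 0, ∃ M > 0, ∀ θ : ℝ, M ≤ |θ| →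
      C / |θ| ^ 3 ≤ gapShrinkageMarginal α l θ) := by
  refine ⟨main_bound α l hα hl, ?_⟩
  have hE1 : 0 < 1 - Real.exp (-(α * l)) := by
    have : Real.exp (-(α * l)) < 1 := Real.exp_lt_one_iff.mpr (by nlinarith)
    linarith
  refine ⟨2 * (1 - Real.exp (-(α * l))) / (α * (1 + (1 + l) ^ 2)), by positivity, 1,
    one_pos, fun θ hθ1 => ?_⟩
  set t := |θ| with ht
  have ht1 : (1:ℝ) ≤ t := hθ1
  have ht0 : 0 < t := by linarith
  have hθ0 : θ ≠ 0 := abs_pos.mp ht0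
  have hEt : 1 - Real.exp (-(α * l)) ≤ 1 - Real.exp (-(α * l * t)) := by
    have : Real.exp (-(α * l * t)) ≤ Real.exp (-(α * l)) := by
      apply Real.exp_le_exp.mpr
      nlinarith [mul_le_mul_of_nonneg_left ht1 (mul_pos hα hl).le]
    linarith
  refine le_trans ?_ (main_bound α l hα hl θ hθ0)
  rw [← ht, div_div, div_le_div_iff₀ (by positivity) (by positivity)]
  have h2 : 1 + (t + l) ^ 2 ≤ (1 + (1 + l) ^ 2) * t ^ 2 := by
    nlinarith [mul_nonneg (mul_nonneg hl.le (sub_nonneg.2 ht1))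
      (by positivity : (0:ℝ) ≤ 2 * t + l * t + l), sq_nonneg (t - 1)]
  calc 2 * (1 - Real.exp (-(α * l))) * (α * t * (1 + (t + l) ^ 2))
      ≤ 2 * (1 - Real.exp (-(α * l))) * (α * t * ((1 + (1 + l) ^ 2) * t ^ 2)) := by
        gcongr
    _ = 2 * (1 - Real.exp (-(α * l))) * (α * (1 + (1 + l) ^ 2) * t ^ 3) := by ring
    _ ≤ 2 * (1 - Real.exp (-(α * l * t))) * (α * (1 + (1 + l) ^ 2) * t ^ 3) := by gcongr
end

section
/- Contraction rate of the relaxed posterior (Theorem 6): let ρ be a metric on Θ ⊆ ℝ^p, θ₀ ∈ Θ, T : ℝ^p → Θ measurable, ε_n → 0, and let Π_n(· | Y_{1:n}) be the relaxed posterior on (θ,u,β). Assume: (a) for every sufficiently large M > 0, Π_n( { G(θ,u,β) > M ε_n² } | Y_{1:n} ) → 0 in P_{θ₀}^n-probability; (b) the primal loss z ↦ f(z;β) is μ-strongly convex with minimizer T(β) and satisfies the gap bound ‖θ − T(β)‖ ≤ √( (2/μ) G(θ,u,β) ) for all (θ,u,β); (c) for every sufficiently large M > 0, the β-marginal of Π_n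 satisfies Π_n( { ρ(T(β),θ₀) > M ε_n } | Y_{1:n} ) → 0 in P_{θ₀}^n-probability; and (d) there is a constant C > 0 with ρ(θ,θ₀) ≤ C‖θ − T(β)‖ + ρ(T(β),θ₀) for all (θ,β). Then for every sufficiently large M > 0, Π_n( { ρ(θ,θ₀) > M ε_n } | Y_{1:n} ) → 0 in P_{θ₀}^n-probability. -/
open MeasureTheory Filter
open scoped ENNReal

/-- The law `P_θ^n` of `n` i.i.d. observations from the density `f` with respect to the
dominating measure `μ`. -/
noncomputable def iidLaw {𝒴 : Type*} [MeasurableSpace 𝒴] (μ : Measure 𝒴)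
    (f : 𝒴 → ℝ) (n : ℕ) : Measure (Fin n → 𝒴) :=
  Measure.pi fun _ => μ.withDensity fun y => ENNReal.ofReal (f y)

/-- The log-likelihood `ℓ_n(θ) = Σ_{i=1}^n log p_θ(Y_i)`. -/
noncomputable def logLik {Θt 𝒴 : Type*} (pdf : Θt → 𝒴 → ℝ) (n : ℕ) (θ : Θt)
    (y : Fin n → 𝒴) : ℝ :=
  ∑ i, Real.log (pdf θ (y i))

/-- The relaxed (gap-shrinkage) posterior
`Π_n(A | Y_{1:n}) = (∫_A e^{ℓ_n(θ)} e^{−α G(θ,u,β)} dΠ₀) / (∫ e^{ℓ_n(θ)} e^{−α G} dΠ₀)`. -/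
noncomputable def relaxedPosterior {Θt Ut Bt 𝒴 : Type*}
    [MeasurableSpace Θt] [MeasurableSpace Ut] [MeasurableSpace Bt]
    (P0 : Measure (Θt × Ut × Bt)) (pdf : Θt → 𝒴 → ℝ) (G : Θt × Ut × Bt → ℝ)
    (a : ℝ) (n : ℕ) (A : Set (Θt × Ut × Bt)) (y : Fin n → 𝒴) : ℝ :=
  (∫ x in A, Real.exp (logLik pdf n x.1 y) * Real.exp (-(a * G x)) ∂P0) /
  (∫ x, Real.exp (logLik pdf n x.1 y) * Real.exp (-(a * G x)) ∂P0)

/-- Set integral of a nonnegative integrable function over a set covered by a union is at most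
the sum of the set integrals over the two covering sets. -/
lemma setIntegral_le_of_subset_union {α : Type*} [MeasurableSpace α] (ν : Measure α)
    (g : α → ℝ) (hg : ∀ x, 0 ≤ g x) (hint : Integrable g ν)
    {A B C : Set α} (h : A ⊆ B ∪ C) :
    ∫ x in A, g x ∂ν ≤ (∫ x in B, g x ∂ν) + ∫ x in C, g x ∂ν := by
  have h1 : ∫ x in A, g x ∂ν ≤ ∫ x in B ∪ C, g x ∂ν :=
    setIntegral_mono_set hint.integrableOn
      (Filter.Eventually.of_forall hg) (Filter.Eventually.of_forall h)
  have h2 : ∫ x in B ∪ C, g x ∂ν ≤ ∫ x, g x ∂(ν.restrict B + ν.restrict C) := by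
    refine integral_mono_measure (Measure.restrict_union_le _ _)
      (Filter.Eventually.of_forall hg) ?_
    exact Integrable.add_measure hint.integrableOn hint.integrableOn
  rw [integral_add_measure hint.integrableOn hint.integrableOn] at h2
  exact h1.trans h2

/-- Subadditivity of the relaxed posterior over a covering by two sets. -/
lemma relaxedPosterior_le_add {Θt Ut Bt 𝒴 : Type*}
    [MeasurableSpace Θt] [MeasurableSpace Ut] [MeasurableSpace Bt]
    (P0 : Measure (Θt × Ut × Bt)) (pdf : Θt → 𝒴 → ℝ) (G : Θt × Ut × Bt → ℝ)
    (a : ℝ) (n : ℕ) {A B C : Set (Θt × Ut × Bt)} (h : A ⊆ B ∪ C) (y : Fin n → 𝒴) :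
    relaxedPosterior P0 pdf G a n A y ≤
      relaxedPosterior P0 pdf G a n B y + relaxedPosterior P0 pdf G a n C y := by
  set g : Θt × Ut × Bt → ℝ :=
    fun x => Real.exp (logLik pdf n x.1 y) * Real.exp (-(a * G x)) with hgdef
  have hg : ∀ x, 0 ≤ g x := fun x => le_of_lt (by positivity)
  by_cases hint : Integrable g P0
  · have hD : 0 ≤ ∫ x, g x ∂P0 := integral_nonneg hg
    rcases hD.lt_or_eq with hD | hD
    · unfold relaxedPosterior
      rw [← add_div, div_le_div_iff_of_pos_right hD]
      exact setIntegral_le_of_subset_union P0 g hg hint h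
    · unfold relaxedPosterior
      rw [← hgdef, ← hD, div_zero, div_zero, div_zero, add_zero]
  · have hD : ∫ x, g x ∂P0 = 0 := integral_undef hint
    unfold relaxedPosterior
    rw [← hgdef, hD, div_zero, div_zero, div_zero, add_zero]

/-- **Contraction rate of the relaxed posterior (Theorem 6).**
Assume (a) the relaxed posterior mass of `{G > M ε_n²}` tends to `0` in probability for all
sufficiently large `M`; (b) the primal loss `z ↦ f(z;β)` is `μ`-strongly convex with
minimizer `T(β)` and the gap bound `‖θ − T(β)‖ ≤ √((2/μ) G(θ,u,β))` holds for all
`(θ,u,β)`; (c) the `β`-marginal of the relaxed posterior satisfies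
`Π_n(ρ(T(β),θ₀) > M ε_n) → 0` in probability for all sufficiently large `M`; and (d)
`ρ(θ,θ₀) ≤ C‖θ − T(β)‖ + ρ(T(β),θ₀)`.  Then the relaxed posterior mass of
`{ρ(θ,θ₀) > M ε_n}` tends to `0` in `P_{θ₀}^n`-probability for all sufficiently large
`M > 0`. -/
theorem relaxed_posterior_contraction_rate
    (p : ℕ) (𝒴 U : Type*) [MeasurableSpace 𝒴] [MeasurableSpace U]
    (μ : Measure 𝒴) [SigmaFinite μ]
    (pdf : EuclideanSpace ℝ (Fin p) → 𝒴 → ℝ)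
    (hpdf_meas : Measurable (Function.uncurry pdf))
    (hpdf_nonneg : ∀ θ y, 0 ≤ pdf θ y)
    (hpdf_prob : ∀ θ, ∫ y, pdf θ y ∂μ = 1)
    (θ₀ : EuclideanSpace ℝ (Fin p))
    (ρ : EuclideanSpace ℝ (Fin p) → EuclideanSpace ℝ (Fin p) → ℝ)
    (hρ_self : ∀ θ, ρ θ θ = 0)
    (hρ_pos : ∀ θ θ', θ ≠ θ' → 0 < ρ θ θ')
    (hρ_symm : ∀ θ θ', ρ θ θ' = ρ θ' θ)
    (hρ_tri : ∀ θ₁ θ₂ θ₃, ρ θ₁ θ₃ ≤ ρ θ₁ θ₂ + ρ θ₂ θ₃)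
    (P0 : Measure (EuclideanSpace ℝ (Fin p) × U × EuclideanSpace ℝ (Fin p)))
    [IsProbabilityMeasure P0]
    (G : EuclideanSpace ℝ (Fin p) × U × EuclideanSpace ℝ (Fin p) → ℝ)
    (hG_meas : Measurable G) (hG_nonneg : ∀ x, 0 ≤ G x)
    (T : EuclideanSpace ℝ (Fin p) → EuclideanSpace ℝ (Fin p)) (hT_meas : Measurable T)
    (α ε : ℕ → ℝ) (hα_pos : ∀ n, 0 < α n)
    (hε_pos : ∀ n, 0 < ε n) (hε_to_zero : Tendsto ε atTop (nhds 0))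
    -- (a) posterior contraction of the duality gap
    (hgap_contract : ∃ Ma : ℝ, 0 < Ma ∧ ∀ M, Ma ≤ M → ∀ δ > 0,
      Tendsto (fun n : ℕ =>
          iidLaw μ (pdf θ₀) n
            {y | δ < relaxedPosterior P0 pdf G (α n) n {x | M * ε n ^ 2 < G x} y})
        atTop (nhds 0))
    -- (b) strong convexity of the primal loss, minimized at T(β), and the gap bound
    (f : EuclideanSpace ℝ (Fin p) → EuclideanSpace ℝ (Fin p) → ℝ)
    (μc : ℝ) (hμc : 0 < μc)
    (hstrong : ∀ β, StrongConvexOn Set.univ μc (fun z => f z β))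
    (hTmin : ∀ β z, f (T β) β ≤ f z β)
    (hgap_bound : ∀ x : EuclideanSpace ℝ (Fin p) × U × EuclideanSpace ℝ (Fin p),
      ‖x.1 - T x.2.2‖ ≤ Real.sqrt (2 / μc * G x))
    -- (c) contraction of the β-marginal projection error
    (hproj_contract : ∃ Mc : ℝ, 0 < Mc ∧ ∀ M, Mc ≤ M → ∀ δ > 0,
      Tendsto (fun n : ℕ =>
          iidLaw μ (pdf θ₀) n
            {y | δ < relaxedPosterior P0 pdf G (α n) n
                {x | M * ε n < ρ (T x.2.2) θ₀} y})
        atTop (nhds 0))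
    -- (d) triangle-type inequality
    (Cρ : ℝ) (hCρ : 0 < Cρ)
    (htri : ∀ (θ β : EuclideanSpace ℝ (Fin p)),
      ρ θ θ₀ ≤ Cρ * ‖θ - T β‖ + ρ (T β) θ₀) :
    ∃ M₀ : ℝ, 0 < M₀ ∧ ∀ M, M₀ ≤ M → ∀ δ > 0,
      Tendsto (fun n : ℕ =>
          iidLaw μ (pdf θ₀) n
            {y | δ < relaxedPosterior P0 pdf G (α n) n {x | M * ε n < ρ x.1 θ₀} y})
        atTop (nhds 0) := by
  obtain ⟨Ma, hMa, hgap⟩ := hgap_contract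
  obtain ⟨Mc, hMc, hproj⟩ := hproj_contract
  refine ⟨max (max (2 * Mc) (Real.sqrt (8 * Ma * Cρ ^ 2 / μc))) 1, ?_, ?_⟩
  · exact lt_of_lt_of_le one_pos (le_max_right _ _)
  intro M hM δ hδ
  have hM1 : (1 : ℝ) ≤ M := le_trans (le_max_right _ _) hM
  have hMpos : 0 < M := lt_of_lt_of_le one_pos hM1
  have hMc2 : 2 * Mc ≤ M := le_trans (le_trans (le_max_left _ _) (le_max_left _ _)) hM
  have hMsq : Real.sqrt (8 * Ma * Cρ ^ 2 / μc) ≤ M :=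
    le_trans (le_trans (le_max_right _ _) (le_max_left _ _)) hM
  -- the gap threshold
  set MG : ℝ := μc * M ^ 2 / (8 * Cρ ^ 2) with hMGdef
  have hMG : Ma ≤ MG := by
    have h0 : (0 : ℝ) ≤ 8 * Ma * Cρ ^ 2 / μc := by positivity
    have hs := Real.sq_sqrt h0
    have hM2 : 8 * Ma * Cρ ^ 2 / μc ≤ M ^ 2 := by
      calc 8 * Ma * Cρ ^ 2 / μc = Real.sqrt (8 * Ma * Cρ ^ 2 / μc) ^ 2 := hs.symm
        _ ≤ M ^ 2 := by
            apply pow_le_pow_left₀ (Real.sqrt_nonneg _) hMsq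
    rw [hMGdef]
    rw [div_le_iff₀ hμc] at hM2
    rw [le_div_iff₀ (by positivity)]
    nlinarith
  have h1 := hgap MG hMG (δ / 2) (by positivity)
  have h2 := hproj (M / 2) (by linarith) (δ / 2) (by positivity)
  -- the key set inclusion
  have hsub : ∀ n : ℕ, {x : EuclideanSpace ℝ (Fin p) × U × EuclideanSpace ℝ (Fin p) |
      M * ε n < ρ x.1 θ₀} ⊆
      {x | MG * ε n ^ 2 < G x} ∪ {x | M / 2 * ε n < ρ (T x.2.2) θ₀} := by
    intro n x hx
    simp only [Set.mem_setOf_eq] at hx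
    by_cases hc : M / 2 * ε n < ρ (T x.2.2) θ₀
    · exact Or.inr hc
    · left
      push_neg at hc
      have hε := hε_pos n
      have htr := htri x.1 x.2.2
      have hnorm : M * ε n / (2 * Cρ) < ‖x.1 - T x.2.2‖ := by
        rw [div_lt_iff₀ (by positivity)]
        nlinarith
      have hgb := hgap_bound x
      have hnn : (0 : ℝ) ≤ 2 / μc * G x := by
        have := hG_nonneg x
        positivity
      have hsq : (M * ε n / (2 * Cρ)) ^ 2 < 2 / μc * G x := by
        calc (M * ε n / (2 * Cρ)) ^ 2 < ‖x.1 - T x.2.2‖ ^ 2 := by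
              apply pow_lt_pow_left₀ hnorm (by positivity)
              norm_num
          _ ≤ Real.sqrt (2 / μc * G x) ^ 2 := by
              apply pow_le_pow_left₀ (norm_nonneg _) hgb
          _ = 2 / μc * G x := Real.sq_sqrt hnn
      simp only [Set.mem_setOf_eq, hMGdef]
      have key : μc * ((M * ε n / (2 * Cρ)) ^ 2) < μc * (2 / μc * G x) :=
        (mul_lt_mul_iff_right₀ hμc).mpr hsq
      have hrw1 : μc * (2 / μc * G x) = 2 * G x := by field_simp
      have hrw2 : μc * ((M * ε n / (2 * Cρ)) ^ 2) = μc * M ^ 2 * ε n ^ 2 / (4 * Cρ ^ 2) := by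
        field_simp; ring
      rw [hrw1, hrw2, div_lt_iff₀ (by positivity)] at key
      rw [div_mul_eq_mul_div, div_lt_iff₀ (by positivity)]
      nlinarith [key]
  -- squeeze
  have hmono : ∀ n : ℕ,
      iidLaw μ (pdf θ₀) n
        {y | δ < relaxedPosterior P0 pdf G (α n) n {x | M * ε n < ρ x.1 θ₀} y} ≤
      iidLaw μ (pdf θ₀) n
        {y | δ / 2 < relaxedPosterior P0 pdf G (α n) n {x | MG * ε n ^ 2 < G x} y} +
      iidLaw μ (pdf θ₀) n
        {y | δ / 2 < relaxedPosterior P0 pdf G (α n) n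
            {x | M / 2 * ε n < ρ (T x.2.2) θ₀} y} := by
    intro n
    refine le_trans (measure_mono ?_) (measure_union_le _ _)
    intro y hy
    simp only [Set.mem_setOf_eq] at hy
    have hle := relaxedPosterior_le_add P0 pdf G (α n) n (hsub n) y
    by_contra hcon
    simp only [Set.mem_union, Set.mem_setOf_eq, not_or, not_lt] at hcon
    have : δ < δ / 2 + δ / 2 := lt_of_lt_of_le hy (hle.trans (add_le_add hcon.1 hcon.2))
    linarith
  have hadd : Tendsto (fun n : ℕ =>
      iidLaw μ (pdf θ₀) n
        {y | δ / 2 < relaxedPosterior P0 pdf G (α n) n {x | MG * ε n ^ 2 < G x} y} +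
      iidLaw μ (pdf θ₀) n
        {y | δ / 2 < relaxedPosterior P0 pdf G (α n) n
            {x | M / 2 * ε n < ρ (T x.2.2) θ₀} y}) atTop (nhds 0) := by
    have := h1.add h2
    simpa using this
  exact tendsto_of_tendsto_of_tendsto_of_le_of_le tendsto_const_nhds hadd
    (fun n => zero_le) hmono
end
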